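/- Let A be a self-adjoint operator with orthonormal eigenbasis (u_j) and eigenvalues E_j, let E ∈ ℝ, let E_J be a closest eigenvalue to E and E_* the closest eigenvalue distinct from E_J, and let Π_J be the orthogonal projection onto the E_J-eigenspace. Then for any u in the domain, ‖u − Π_J u‖ ≤ ‖(A − E)u‖ / |E − E_*|. -/
import Mathlib


open scoped RealInnerProductSpace

theorem stmt16 {H : Type*} [NormedAddCommGroup H] [InnerProductSpace ℝ H]
    [CompleteSpace H] {ι : Type*} (b : HilbertBasis ι ℝ H)
    (A : H →L[ℝ] H) (hA : IsSelfAdjoint A)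
    (Ev : ι → ℝ) (heig : ∀ j, A (b j) = Ev j • b j)
    (E : ℝ) (J : ι) (hJ : ∀ j, |E - Ev J| ≤ |E - Ev j|)
    (Estar : ℝ) (hstar_ev : ∃ j, Ev j = Estar) (hne : Estar ≠ Ev J)
    (hclosest : ∀ j, Ev j ≠ Ev J → |E - Estar| ≤ |E - Ev j|)
    (u p : H) (hp : A p = Ev J • p)
    (hperp : ∀ q : H, A q = Ev J • q → ⟪u - p, q⟫ = 0) :
    ‖u - p‖ ≤ ‖A u - E • u‖ / |E - Estar| := by
  have hsym : ∀ x y : H, ⟪A x, y⟫ = ⟪x, A y⟫ :=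
    (ContinuousLinearMap.isSelfAdjoint_iff_isSymmetric.mp hA)
  set v := u - p with hv
  set w := A u - E • u with hw
  set c := |E - Estar| with hcdef
  have hc : 0 < c := by
    rcases hstar_ev with ⟨j0, hj0⟩
    have h1 := hJ j0
    rw [hj0] at h1
    rcases (abs_nonneg (E - Estar)).lt_or_eq with h | h
    · exact h
    · exfalso
      have hE : E = Estar := by
        have := abs_eq_zero.mp h.symm; linarith
      have hEJ : E = Ev J := by
        rw [← h] at h1
        have := abs_eq_zero.mp (le_antisymm h1 (abs_nonneg _))
        linarith
      exact hne (hEJ ▸ hE.symm)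
  -- coefficients of p vanish off the eigenspace
  have hpj : ∀ j, Ev j ≠ Ev J → ⟪p, b j⟫ = 0 := by
    intro j hj
    have h1 := hsym p (b j)
    rw [hp, heig j, real_inner_smul_left, real_inner_smul_right] at h1
    have : (Ev J - Ev j) * ⟪p, b j⟫ = 0 := by ring_nf; linarith
    rcases mul_eq_zero.mp this with h | h
    · exact absurd (by linarith : Ev j = Ev J) hj
    · exact h
  -- coefficients of v vanish on the eigenspace
  have hvj : ∀ j, Ev j = Ev J → ⟪v, b j⟫ = 0 := fun j hj =>
    hperp (b j) (by rw [heig j, hj])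
  -- key coefficient identity
  have hwj : ∀ j, ⟪w, b j⟫ = (Ev j - E) * ⟪u, b j⟫ := by
    intro j
    rw [hw]
    rw [inner_sub_left, hsym u (b j), heig j, real_inner_smul_right,
      real_inner_smul_left]
    ring
  have key : ∀ j, c ^ 2 * (⟪v, b j⟫ * ⟪b j, v⟫) ≤ ⟪w, b j⟫ * ⟪b j, w⟫ := by
    intro j
    rw [show (⟪b j, v⟫ : ℝ) = ⟪v, b j⟫ from real_inner_comm _ _, show (⟪b j, w⟫ : ℝ) = ⟪w, b j⟫ from real_inner_comm _ _]
    by_cases h : Ev j = Ev J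
    · rw [hvj j h]
      simpa using mul_self_nonneg ⟪w, b j⟫
    · have h1 : ⟪v, b j⟫ = ⟪u, b j⟫ := by
        rw [hv, inner_sub_left, hpj j h]; ring
      have h2 : c ≤ |Ev j - E| := by
        rw [abs_sub_comm]; exact hclosest j h
      have h3 : c ^ 2 ≤ (Ev j - E) ^ 2 := by
        rw [← sq_abs (Ev j - E)]
        exact pow_le_pow_left₀ hc.le h2 2
      rw [h1, hwj j]
      nlinarith [mul_self_nonneg ⟪u, b j⟫]
  have Sv := b.summable_inner_mul_inner v v
  have Sw := b.summable_inner_mul_inner w w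
  have hsum : c ^ 2 * ‖v‖ ^ 2 ≤ ‖w‖ ^ 2 := by
    have hle : (∑' j, c ^ 2 * (⟪v, b j⟫ * ⟪b j, v⟫)) ≤
        ∑' j, ⟪w, b j⟫ * ⟪b j, w⟫ :=
      Summable.tsum_le_tsum key (Sv.mul_left _) Sw
    rw [tsum_mul_left, b.tsum_inner_mul_inner v v, b.tsum_inner_mul_inner w w,
      real_inner_self_eq_norm_sq, real_inner_self_eq_norm_sq] at hle
    exact hle
  rw [le_div_iff₀ hc]
  nlinarith [norm_nonneg v, norm_nonneg w, hc]
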